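/- Let R be a commutative ring, E a simple R-module, D a finitely generated R-module, and M = E ⊕ D with E identified with the submodule E ⊕ 0 (the range of the inclusion E → E ⊕ D) and D identified with the submodule 0 ⊕ D. Then the following are equivalent: (a) E is strongly hollow in M; (b) every submodule N of M either contains E or is contained in 0 ⊕ D; (c) Ann(E) + Ann(D) = R; (d) Ann(D) is not contained in Ann(E). Here Ann(X) denotes the annihilator ideal {r ∈ R | rX = 0}. -/
import Mathlib

section Aux

variable {R : Type*} [CommRing R] {E D : Type*}
    [AddCommGroup E] [Module R E] [IsSimpleModule R E]
    [AddCommGroup D] [Module R D] [Module.Finite R D]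

/-- In a simple module, every nonzero element spans. -/
lemma aux_span_eq_top (e : E) (he : e ≠ 0) : Submodule.span R {e} = ⊤ :=
  IsSimpleModule.span_singleton_eq_top R he

/-- Annihilator of a nonzero element of a simple module is the module annihilator. -/
lemma aux_ann_elem {e : E} (he : e ≠ 0) {r : R} (hr : r • e = 0) :
    r ∈ Module.annihilator R E := by
  rw [Module.mem_annihilator]
  intro x
  have hx : x ∈ Submodule.span R {e} := by rw [aux_span_eq_top e he]; trivial
  obtain ⟨s, rfl⟩ := Submodule.mem_span_singleton.mp hx
  rw [smul_comm, hr, smul_zero]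

lemma aux_b_imp_a
    (hb : ∀ N : Submodule R (E × D),
        LinearMap.range (LinearMap.inl R E D) ≤ N ∨
        N ≤ LinearMap.range (LinearMap.inr R E D)) :
    ∀ K L : Submodule R (E × D),
        LinearMap.range (LinearMap.inl R E D) ≤ K ⊔ L →
        LinearMap.range (LinearMap.inl R E D) ≤ K ∨
        LinearMap.range (LinearMap.inl R E D) ≤ L := by
  intro K L hKL
  rcases hb K with hK | hK
  · exact Or.inl hK
  rcases hb L with hL | hL
  · exact Or.inr hL
  exfalso
  have := IsSimpleModule.nontrivial R E
  obtain ⟨e, he⟩ := exists_ne (0 : E)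
  have : ((e, 0) : E × D) ∈ K ⊔ L := hKL ⟨e, rfl⟩
  have : ((e, 0) : E × D) ∈ LinearMap.range (LinearMap.inr R E D) :=
    (sup_le hK hL) this
  rw [LinearMap.range_inr, LinearMap.mem_ker] at this
  exact he this

lemma aux_c_imp_b
    (hc : Module.annihilator R E ⊔ Module.annihilator R D = ⊤) :
    ∀ N : Submodule R (E × D),
        LinearMap.range (LinearMap.inl R E D) ≤ N ∨
        N ≤ LinearMap.range (LinearMap.inr R E D) := by
  intro N
  by_cases hN : N ≤ LinearMap.range (LinearMap.inr R E D)
  · exact Or.inr hN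
  left
  -- get an element of N with nonzero first coordinate
  obtain ⟨p, hpN, hp⟩ := SetLike.not_le_iff_exists.mp hN
  rw [LinearMap.range_inr, LinearMap.mem_ker] at hp
  -- decompose 1 = a + b
  have h1 : (1 : R) ∈ Module.annihilator R E ⊔ Module.annihilator R D := by
    rw [hc]; trivial
  obtain ⟨a, ha, b, hb, hab⟩ := Submodule.mem_sup.mp h1
  -- b • p = (p.1, 0) ∈ N
  have hbp : b • p = (p.1, 0) := by
    have h1 : b • p.1 = p.1 := by
      have ha1 : a • p.1 = 0 := Module.mem_annihilator.mp ha p.1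
      have h2 := congrArg (· • p.1) hab
      simpa [add_smul, ha1] using h2
    have h2 : b • p.2 = 0 := Module.mem_annihilator.mp hb p.2
    ext <;> simp [h1, h2]
  have hmem : ((p.1, 0) : E × D) ∈ N := hbp ▸ N.smul_mem b hpN
  rintro x ⟨e, rfl⟩
  have hx : e ∈ Submodule.span R {p.1} := by rw [aux_span_eq_top p.1 hp]; trivial
  obtain ⟨r, rfl⟩ := Submodule.mem_span_singleton.mp hx
  have : r • ((p.1, 0) : E × D) ∈ N := N.smul_mem r hmem
  simpa using this

lemma aux_d_imp_c
    (hd : ¬ Module.annihilator R D ≤ Module.annihilator R E) :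
    Module.annihilator R E ⊔ Module.annihilator R D = ⊤ := by
  have hmax : (Module.annihilator R E).IsMaximal := IsSimpleModule.annihilator_isMaximal
  by_contra hne
  have h := hmax.eq_of_le hne le_sup_left
  exact hd (le_sup_right.trans h.ge)

lemma aux_a_imp_d
    (ha : ∀ K L : Submodule R (E × D),
        LinearMap.range (LinearMap.inl R E D) ≤ K ⊔ L →
        LinearMap.range (LinearMap.inl R E D) ≤ K ∨
        LinearMap.range (LinearMap.inl R E D) ≤ L) :
    ¬ Module.annihilator R D ≤ Module.annihilator R E := by
  intro hle
  have := IsSimpleModule.nontrivial R E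
  obtain ⟨e₀, he₀⟩ := exists_ne (0 : E)
  -- find a generator d₀ of D with Ann(d₀) ≤ Ann(E)
  have hprime : (Module.annihilator R E).IsPrime :=
    IsSimpleModule.annihilator_isMaximal.isPrime
  obtain ⟨s, hs⟩ := Module.Finite.fg_top (R := R) (M := D)
  have key : ∃ d₀ : D, ∀ r : R, r • d₀ = 0 → r ∈ Module.annihilator R E := by
    by_contra hcon
    push_neg at hcon
    choose f hf1 hf2 using hcon
    -- the product of all f d over d ∈ s annihilates D
    set r : R := ∏ d ∈ s, f d with hr
    have hrD : r ∈ Module.annihilator R D := by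
      rw [Module.mem_annihilator]
      intro m
      have hm : m ∈ Submodule.span R (s : Set D) := by rw [hs]; trivial
      induction hm using Submodule.span_induction with
      | mem d hd =>
        classical
        rw [hr, ← Finset.mul_prod_erase s f hd, mul_comm, mul_smul, hf1 d, smul_zero]
      | zero => simp
      | add x y _ _ hx hy => rw [smul_add, hx, hy, add_zero]
      | smul c x _ hx => rw [smul_comm, hx, smul_zero]
    have : r ∈ Module.annihilator R E := hle hrD
    -- but the product of elements not in a prime is not in the prime
    have hnot : r ∉ Module.annihilator R E := by
      rw [hr]
      apply Finset.prod_induction f (· ∉ Module.annihilator R E)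
      · intro x y hx hy hxy
        rcases hprime.mem_or_mem hxy with h | h
        exacts [hx h, hy h]
      · intro h
        exact hprime.ne_top (Ideal.eq_top_of_isUnit_mem _ h isUnit_one)
      · intro d _; exact hf2 d
    exact hnot this
  obtain ⟨d₀, hd₀⟩ := key
  set K := LinearMap.range (LinearMap.inr R E D) with hK
  set L := Submodule.span R {((e₀, d₀) : E × D)} with hL
  have hsup : LinearMap.range (LinearMap.inl R E D) ≤ K ⊔ L := by
    rintro x ⟨e, rfl⟩
    have hx : e ∈ Submodule.span R {e₀} := by rw [aux_span_eq_top e₀ he₀]; trivial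
    obtain ⟨r, rfl⟩ := Submodule.mem_span_singleton.mp hx
    have h1 : ((0, -(r • d₀)) : E × D) ∈ K := ⟨-(r • d₀), rfl⟩
    have h2 : r • ((e₀, d₀) : E × D) ∈ L := Submodule.smul_mem _ r (Submodule.mem_span_singleton_self _)
    have : ((0, -(r • d₀)) : E × D) + r • ((e₀, d₀) : E × D) ∈ K ⊔ L :=
      Submodule.add_mem_sup h1 h2
    simpa [Prod.ext_iff] using this
  rcases ha K L hsup with h | h
  · have : ((e₀, 0) : E × D) ∈ K := h ⟨e₀, rfl⟩
    rw [hK, LinearMap.range_inr, LinearMap.mem_ker] at this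
    exact he₀ this
  · have : ((e₀, 0) : E × D) ∈ L := h ⟨e₀, rfl⟩
    obtain ⟨r, hr⟩ := Submodule.mem_span_singleton.mp this
    rw [Prod.ext_iff] at hr
    obtain ⟨hr1, hr2⟩ := hr
    simp only [Prod.smul_fst, Prod.smul_snd] at hr1 hr2
    have hrE : r ∈ Module.annihilator R E := hd₀ r hr2
    have h0 : r • e₀ = 0 := Module.mem_annihilator.mp hrE e₀
    exact he₀ (by rw [← hr1, h0])

end Aux

/-- Let `R` be a commutative ring, `E` a simple `R`-module, `D` a finitely generated
`R`-module and `M = E ⊕ D`.  The following are equivalent: (a) `E ⊕ 0` is strongly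
hollow in `M`; (b) every submodule of `M` contains `E ⊕ 0` or is contained in `0 ⊕ D`;
(c) `Ann(E) + Ann(D) = R`; (d) `Ann(D) ⊄ Ann(E)`. -/
theorem simple_stronglyHollow_tfae
    {R : Type*} [CommRing R] {E D : Type*}
    [AddCommGroup E] [Module R E] [IsSimpleModule R E]
    [AddCommGroup D] [Module R D] [Module.Finite R D] :
    ((∀ K L : Submodule R (E × D),
        LinearMap.range (LinearMap.inl R E D) ≤ K ⊔ L →
        LinearMap.range (LinearMap.inl R E D) ≤ K ∨
        LinearMap.range (LinearMap.inl R E D) ≤ L) ↔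
      (∀ N : Submodule R (E × D),
        LinearMap.range (LinearMap.inl R E D) ≤ N ∨
        N ≤ LinearMap.range (LinearMap.inr R E D))) ∧
    ((∀ K L : Submodule R (E × D),
        LinearMap.range (LinearMap.inl R E D) ≤ K ⊔ L →
        LinearMap.range (LinearMap.inl R E D) ≤ K ∨
        LinearMap.range (LinearMap.inl R E D) ≤ L) ↔
      Module.annihilator R E ⊔ Module.annihilator R D = ⊤) ∧
    ((∀ K L : Submodule R (E × D),
        LinearMap.range (LinearMap.inl R E D) ≤ K ⊔ L →
        LinearMap.range (LinearMap.inl R E D) ≤ K ∨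
        LinearMap.range (LinearMap.inl R E D) ≤ L) ↔
      ¬ Module.annihilator R D ≤ Module.annihilator R E) := by
  refine ⟨⟨fun ha => ?_, aux_b_imp_a⟩,
    ⟨fun ha => aux_d_imp_c (aux_a_imp_d ha), fun hc => aux_b_imp_a (aux_c_imp_b hc)⟩,
    ⟨aux_a_imp_d, fun hd => aux_b_imp_a (aux_c_imp_b (aux_d_imp_c hd))⟩⟩
  exact aux_c_imp_b (aux_d_imp_c (aux_a_imp_d ha))
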